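/- For every composition mu of n, every c in Cr(mu), and every pair (a,b) in S(n) x S(n) with a^{-1}b of ordered cycle type mu, the decoding function delta(c) = u_{c^{-1}c^∨}^{-1} c^{-1} u_{c^{-1}c^∨} satisfies Phi_{delta(c)}(Phi_c(a,b)) = (a,b), where Phi_c(a,b) = (a u_{a^{-1}b} c u_{a^{-1}b}^{-1}, a u_{a^{-1}b} c^∨ u_{a^{-1}b}^{-1}). -/

import Mathlib

open Equiv

/-- Word metric on the symmetric group induced by the set of all transpositions:
`trdist a b` is the minimal number of transpositions whose product is `a⁻¹ * b`. -/
noncomputable def trdist {n : ℕ} (a b : Equiv.Perm (Fin n)) : ℕ :=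
  sInf {k | ∃ l : List (Equiv.Perm (Fin n)), l.length = k ∧ (∀ t ∈ l, t.IsSwap) ∧ l.prod = a⁻¹ * b}

/-- The set of midpoints of `a` and `b`. -/
noncomputable def midpts {n : ℕ} (a b : Equiv.Perm (Fin n)) : Set (Equiv.Perm (Fin n)) :=
  {m | trdist a m + trdist m b = trdist a b ∧ |(trdist a m : ℤ) - (trdist m b : ℤ)| ≤ 1}

/-- The forward cycle on a finite subset: cycles through its elements in increasing order. -/
def fwdCycle {n : ℕ} (s : Finset (Fin n)) : Equiv.Perm (Fin n) :=
  (s.sort (· ≤ ·)).formPerm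

/-- The increasing list of minima of the cycles (orbits, including fixed points) of `p`. -/
noncomputable def cycleMins {n : ℕ} (p : Equiv.Perm (Fin n)) : List (Fin n) :=
  Finset.sort
    (@Finset.filter _ (fun i => ∀ j, p.SameCycle i j → i ≤ j) (Classical.decPred _) Finset.univ) (· ≤ ·)

/-- The number of orbits (cycles, including fixed points) of `p` acting on `Fin n`. -/
noncomputable def cycleCount {n : ℕ} (p : Equiv.Perm (Fin n)) : ℕ :=
  (cycleMins p).length

/-- The ordered cycle type of `p`: the list of cycle (orbit) lengths of `p`,
ordered by increasing cycle minima. -/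
noncomputable def orderedCycleType {n : ℕ} (p : Equiv.Perm (Fin n)) : List ℕ :=
  (cycleMins p).map (fun i =>
    (@Finset.filter _ (fun j => p.SameCycle i j) (Classical.decPred _) Finset.univ).card)

/-- The canonical permutation with ordered cycle type `μ` (starting at offset `off`):
it cyclically permutes the first `μ₁` points in increasing order, then the next `μ₂` points,
and so on. -/
def canonPerm (n : ℕ) : List ℕ → ℕ → Equiv.Perm (Fin n)
  | [], _ => 1
  | m :: rest, off =>
      fwdCycle ((Finset.univ : Finset (Fin n)).filter (fun i => off ≤ i.val ∧ i.val < off + m)) *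
        canonPerm n rest (off + m)

/-- `u` conjugates `p` into `q` and maps the sequence of cycle minima of `p`
to that of `q`, entrywise in order. -/
noncomputable def IsConjugator {n : ℕ} (p q u : Equiv.Perm (Fin n)) : Prop :=
  u * p * u⁻¹ = q ∧ (cycleMins p).map u = cycleMins q

/-- A list of blocks is noncrossing: there are no `a < b < c < d` with `a, c` in one block
and `b, d` in a different block. -/
def NoncrossingList {n : ℕ} (L : List (Finset (Fin n))) : Prop :=
  ¬ ∃ a b c d : Fin n, a < b ∧ b < c ∧ c < d ∧
    ∃ s ∈ L, ∃ t ∈ L, s ≠ t ∧ a ∈ s ∧ c ∈ s ∧ b ∈ t ∧ d ∈ t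

/-- The set of all midpoints of pairs `(a, b) ∈ A × B`. -/
noncomputable def midSet {n : ℕ} (A B : Finset (Equiv.Perm (Fin n))) :
    Finset (Equiv.Perm (Fin n)) :=
  @Finset.filter _ (fun m => ∃ a ∈ A, ∃ b ∈ B, m ∈ midpts a b) (Classical.decPred _) Finset.univ

/-- The distance between two sets of permutations. -/
noncomputable def setDist {n : ℕ} (A B : Finset (Equiv.Perm (Fin n))) : ℕ :=
  sInf {k | ∃ a ∈ A, ∃ b ∈ B, trdist a b = k}

/-- The embedding of the hypercube `Z₂^N` into `S(n)` (for `2N ≤ n`) sending the `i`-th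
standard basis vector to the transposition of `2i` and `2i+1` (0-indexed). -/
def cubeMap (N n : ℕ) (h : 2 * N ≤ n) (x : Fin N → ZMod 2) : Equiv.Perm (Fin n) :=
  ((List.finRange N).map (fun i =>
    if x i = 1 then
      Equiv.swap (⟨2 * i.val, by have := i.isLt; omega⟩ : Fin n)
        ⟨2 * i.val + 1, by have := i.isLt; omega⟩
    else 1)).prod



/-- The setoid of cycles (orbits) of a permutation. -/
def cycSetoid {α : Type*} (g : Equiv.Perm α) : Setoid α :=
  ⟨g.SameCycle, ⟨Equiv.Perm.SameCycle.refl g, fun h => h.symm, fun h h' => h.trans h'⟩⟩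

@[simp] lemma cycSetoid_r {α : Type*} (g : Equiv.Perm α) (x y : α) :
    cycSetoid g x y ↔ g.SameCycle x y := Iff.rfl

/-- Number of classes of a setoid. -/
noncomputable def ncl {α : Type*} (S : Setoid α) : ℕ := Nat.card (Quotient S)

/-- Merge the classes of `a` and `b` in `S`. -/
def mergeS {α : Type*} (S : Setoid α) (a b : α) : Setoid α where
  r x y := S x y ∨ (S x a ∧ S b y) ∨ (S x b ∧ S a y)
  iseqv := by
    constructor
    · intro x; exact Or.inl (S.refl x)
    · rintro x y (h | ⟨h1, h2⟩ | ⟨h1, h2⟩)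
      · exact Or.inl (S.symm h)
      · exact Or.inr (Or.inr ⟨S.symm h2, S.symm h1⟩)
      · exact Or.inr (Or.inl ⟨S.symm h2, S.symm h1⟩)
    · rintro x y z (h | ⟨h1, h2⟩ | ⟨h1, h2⟩) (h' | ⟨h1', h2'⟩ | ⟨h1', h2'⟩)
      · exact Or.inl (S.trans h h')
      · exact Or.inr (Or.inl ⟨S.trans h h1', h2'⟩)
      · exact Or.inr (Or.inr ⟨S.trans h h1', h2'⟩)
      · exact Or.inr (Or.inl ⟨h1, S.trans h2 h'⟩)
      · exact Or.inl (S.trans h1 (S.trans (S.symm (S.trans h2 h1')) h2'))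
      · exact Or.inl (S.trans h1 h2')
      · exact Or.inr (Or.inr ⟨h1, S.trans h2 h'⟩)
      · exact Or.inl (S.trans h1 h2')
      · exact Or.inl (S.trans h1 (S.trans (S.symm (S.trans h2 h1')) h2'))

lemma mergeS_rel {α : Type*} (S : Setoid α) (a b x y : α) :
    mergeS S a b x y ↔ S x y ∨ (S x a ∧ S b y) ∨ (S x b ∧ S a y) := Iff.rfl

lemma le_mergeS {α : Type*} (S : Setoid α) (a b : α) : S ≤ mergeS S a b :=
  fun {_ _} h => Or.inl h

lemma mergeS_self {α : Type*} (S : Setoid α) (a b : α) (h : S a b) : mergeS S a b = S := by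
  ext x y
  constructor
  · rintro (h' | ⟨h1, h2⟩ | ⟨h1, h2⟩)
    · exact h'
    · exact S.trans h1 (S.trans h h2)
    · exact S.trans h1 (S.trans (S.symm h) h2)
  · exact fun h' => Or.inl h'

lemma mergeS_rel_ab {α : Type*} (S : Setoid α) (a b : α) : mergeS S a b a b :=
  Or.inr (Or.inl ⟨S.refl a, S.refl b⟩)

/-- Monotone-count: coarser setoid has fewer classes. -/
lemma ncl_le_of_le {α : Type*} [Finite α] {S T : Setoid α} (h : S ≤ T) : ncl T ≤ ncl S := by
  apply Nat.card_le_card_of_surjective (Quotient.map' id (fun x y hxy => h hxy))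
  rintro ⟨x⟩
  exact ⟨Quotient.mk S x, rfl⟩

lemma setoid_eq_of_le_of_ncl_le {α : Type*} [Finite α] {S T : Setoid α} (h : S ≤ T)
    (hc : ncl S ≤ ncl T) : S = T := by
  set f := Quotient.map' (fun x => x) (fun x y (hxy : S x y) => h hxy) with hf
  have hsurj : Function.Surjective f := by
    rintro ⟨x⟩; exact ⟨Quotient.mk S x, rfl⟩
  have hbij : Function.Bijective f := (Nat.bijective_iff_surjective_and_card f).mpr
    ⟨hsurj, le_antisymm hc (Nat.card_le_card_of_surjective f hsurj)⟩
  ext x y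
  refine ⟨fun hxy => h hxy, fun hxy => ?_⟩
  have : (Quotient.mk S x : Quotient S) = Quotient.mk S y := by
    apply hbij.injective
    exact Quotient.sound hxy
  exact Quotient.exact this

/-- Merging decreases class count by at most one. -/
lemma ncl_le_mergeS_add_one {α : Type*} [Finite α] (S : Setoid α) (a b : α) :
    ncl S ≤ ncl (mergeS S a b) + 1 := by
  classical
  have key : ncl S ≤ Nat.card (Quotient (mergeS S a b) ⊕ Unit) := by
    refine Nat.card_le_card_of_injective
      (Quotient.lift (fun x => if S x b then Sum.inr () else Sum.inl (Quotient.mk _ x)) ?_) ?_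
    · intro x y hxy
      have hb : S x b ↔ S y b := ⟨fun h => S.trans (S.symm hxy) h, fun h => S.trans hxy h⟩
      by_cases hx : S x b
      · simp [hx, hb.mp hx]
      · simp only [if_neg hx, if_neg (fun h => hx (hb.mpr h))]
        exact congrArg Sum.inl (Quotient.sound (le_mergeS S a b hxy))
    · rintro ⟨x⟩ ⟨y⟩ hxy
      change (if S x b then _ else _) = (if S y b then _ else _) at hxy
      by_cases hx : S x b <;> by_cases hy : S y b
      · exact Quotient.sound (S.trans hx (S.symm hy))
      · rw [if_pos hx, if_neg hy] at hxy
        exact absurd hxy (by simp)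
      · rw [if_neg hx, if_pos hy] at hxy
        exact absurd hxy (by simp)
      · rw [if_neg hx, if_neg hy] at hxy
        rcases Quotient.exact (Sum.inl.inj hxy) with h' | ⟨h1, h2⟩ | ⟨h1, h2⟩
        · exact Quotient.sound h'
        · exact absurd (S.symm h2) hy
        · exact absurd h1 hx
  simpa [Nat.card_sum, ncl] using key

/-- Merging two distinct classes decreases class count by exactly one. -/
lemma ncl_mergeS {α : Type*} [Finite α] (S : Setoid α) (a b : α) (h : ¬ S a b) :
    ncl (mergeS S a b) + 1 = ncl S := by
  classical
  refine le_antisymm ?_ (ncl_le_mergeS_add_one S a b)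
  have key : Nat.card (Quotient (mergeS S a b) ⊕ Unit) ≤ ncl S := by
    refine Nat.card_le_card_of_injective (Sum.elim
      (Quotient.lift (fun x => if mergeS S a b x a then Quotient.mk S a else Quotient.mk S x) ?_)
      (fun _ => Quotient.mk S b)) ?_
    · intro x y hxy
      have ha : mergeS S a b x a ↔ mergeS S a b y a :=
        ⟨fun h' => (mergeS S a b).trans ((mergeS S a b).symm hxy) h',
         fun h' => (mergeS S a b).trans hxy h'⟩
      by_cases hx : mergeS S a b x a
      · simp [hx, ha.mp hx]
      · have hy : ¬ mergeS S a b y a := fun h' => hx (ha.mpr h')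
        simp only [if_neg hx, if_neg hy]
        rcases hxy with h' | ⟨h1, h2⟩ | ⟨h1, h2⟩
        · exact Quotient.sound h'
        · exact absurd (Or.inl h1) hx
        · exact absurd (Or.inr (Or.inr ⟨h1, S.refl a⟩)) hx
    · rintro (⟨⟨x⟩⟩ | ⟨⟩) (⟨⟨y⟩⟩ | ⟨⟩) hxy
      · refine congrArg Sum.inl ?_
        change (if mergeS S a b x a then _ else _) = (if mergeS S a b y a then _ else _) at hxy
        by_cases hx : mergeS S a b x a <;> by_cases hy : mergeS S a b y a
        · exact Quotient.sound ((mergeS S a b).trans hx ((mergeS S a b).symm hy))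
        · rw [if_pos hx, if_neg hy] at hxy
          exact absurd (Or.inl (S.symm (Quotient.exact hxy))) hy
        · rw [if_neg hx, if_pos hy] at hxy
          exact absurd (Or.inl (Quotient.exact hxy)) hx
        · rw [if_neg hx, if_neg hy] at hxy
          exact Quotient.sound (le_mergeS S a b (Quotient.exact hxy))
      · exfalso
        change (if mergeS S a b x a then _ else _) = _ at hxy
        by_cases hx : mergeS S a b x a
        · rw [if_pos hx] at hxy
          exact h (Quotient.exact hxy)
        · rw [if_neg hx] at hxy
          exact hx (Or.inr (Or.inr ⟨Quotient.exact hxy, S.refl a⟩))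
      · exfalso
        change _ = (if mergeS S a b y a then _ else _) at hxy
        by_cases hy : mergeS S a b y a
        · rw [if_pos hy] at hxy
          exact h (Quotient.exact hxy.symm)
        · rw [if_neg hy] at hxy
          exact hy (Or.inr (Or.inr ⟨Quotient.exact hxy.symm, S.refl a⟩))
      · rfl
  simpa [Nat.card_sum, ncl] using key
section Part2
open Equiv

variable {α : Type*} [Fintype α] [DecidableEq α]

lemma sc_apply (g : Perm α) (x : α) : g.SameCycle x (g x) := ⟨1, by simp⟩

lemma pow_fix {g : Perm α} {x : α} (h : g x = x) : ∀ q : ℕ, (g ^ q) x = x := by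
  intro q
  induction q with
  | zero => simp
  | succ q ih => rw [pow_succ, Perm.mul_apply, h, ih]

lemma pow_mod_apply {g : Perm α} {x : α} {s : ℕ} (h : (g ^ s) x = x) (i : ℕ) :
    (g ^ (i % s)) x = (g ^ i) x := by
  conv_rhs => rw [← Nat.mod_add_div i s]
  rw [pow_add, Perm.mul_apply, pow_mul]
  rw [pow_fix (x := x) h (i / s)]

lemma cycSetoid_le_of_inv (S : Setoid α) (g : Perm α) (h : ∀ x, S x (g x)) :
    cycSetoid g ≤ S := by
  intro x y hxy
  obtain ⟨i, -, hi⟩ := Perm.SameCycle.exists_pow_eq' hxy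
  subst hi
  clear hxy
  induction i with
  | zero => simpa using S.refl x
  | succ i ih =>
    have hh : (g ^ (i + 1)) x = g ((g ^ i) x) := by rw [pow_succ', Perm.mul_apply]
    rw [hh]
    exact S.trans ih (h _)

lemma mul_swap_le_merge (σ : Perm α) (a b : α) :
    cycSetoid (σ * swap a b) ≤ mergeS (cycSetoid σ) a b := by
  apply cycSetoid_le_of_inv
  intro x
  by_cases hxa : x = a
  · have hh : (σ * swap a b) x = σ b := by rw [Perm.mul_apply, hxa, swap_apply_left]
    rw [hh, hxa]
    exact Or.inr (Or.inl ⟨Perm.SameCycle.refl σ a, sc_apply σ b⟩)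
  · by_cases hxb : x = b
    · have hh : (σ * swap a b) x = σ a := by rw [Perm.mul_apply, hxb, swap_apply_right]
      rw [hh, hxb]
      exact Or.inr (Or.inr ⟨Perm.SameCycle.refl σ b, sc_apply σ a⟩)
    · have hh : (σ * swap a b) x = σ x := by
        rw [Perm.mul_apply, swap_apply_of_ne_of_ne hxa hxb]
      rw [hh]
      exact Or.inl (sc_apply σ x)

lemma ncl_le_mul_swap_add_one (σ : Perm α) (a b : α) :
    ncl (cycSetoid σ) ≤ ncl (cycSetoid (σ * swap a b)) + 1 :=
  le_trans (ncl_le_mergeS_add_one (cycSetoid σ) a b)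
    (Nat.add_le_add_right (ncl_le_of_le (mul_swap_le_merge σ a b)) 1)

lemma mul_swap_swap (σ : Perm α) (a b : α) : (σ * swap a b) * swap a b = σ := by
  rw [mul_assoc, swap_mul_self, mul_one]

lemma ncl_mul_swap_le_add_one (σ : Perm α) (a b : α) :
    ncl (cycSetoid (σ * swap a b)) ≤ ncl (cycSetoid σ) + 1 := by
  have hh := ncl_le_mul_swap_add_one (σ * swap a b) a b
  rwa [mul_swap_swap] at hh

/-- S1: multiplying by a swap joining different cycles puts `a, b` on the same cycle. -/
lemma sameCycle_mul_swap_of_not {σ : Perm α} {a b : α} (h : ¬ σ.SameCycle a b) :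
    (σ * swap a b).SameCycle a b := by
  classical
  set τ := σ * swap a b with hτ
  have key : ∀ i, 1 ≤ i → (∀ j, 1 ≤ j → j < i → (τ ^ j) a ≠ a ∧ (τ ^ j) a ≠ b) →
      (τ ^ i) a = (σ ^ i) b := by
    intro i
    induction i with
    | zero => omega
    | succ i ih =>
      intro _ hprev
      by_cases hi : 1 ≤ i
      · have hmid := ih hi (fun j h1 h2 => hprev j h1 (by omega))
        have hne := hprev i hi (by omega)
        rw [hmid] at hne
        have hstep : (τ ^ (i + 1)) a = τ ((τ ^ i) a) := by rw [pow_succ', Perm.mul_apply]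
        rw [hstep, hmid, hτ, Perm.mul_apply, swap_apply_of_ne_of_ne hne.1 hne.2,
          ← Perm.mul_apply, ← pow_succ']
      · have hi0 : i = 0 := by omega
        subst hi0
        simp [hτ, Perm.mul_apply, swap_apply_left]
  have hex : ∃ m, 1 ≤ m ∧ ((τ ^ m) a = a ∨ (τ ^ m) a = b) :=
    ⟨orderOf τ, orderOf_pos τ, Or.inl (by rw [pow_orderOf_eq_one]; rfl)⟩
  set m := Nat.find hex with hm
  obtain ⟨hm1, hm2⟩ := Nat.find_spec hex
  have hmin : ∀ j, 1 ≤ j → j < m → (τ ^ j) a ≠ a ∧ (τ ^ j) a ≠ b := by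
    intro j h1 h2
    have := Nat.find_min hex h2
    push_neg at this
    exact this h1
  have hkey := key m hm1 hmin
  rcases hm2 with hm2 | hm2
  · exact absurd (Perm.SameCycle.symm ⟨(m : ℤ), by rw [zpow_natCast, ← hkey, hm2]⟩) h
  · exact ⟨(m : ℤ), by rw [zpow_natCast, hm2]⟩

/-- S2: multiplying by a swap inside one cycle separates `a, b`. -/
lemma not_sameCycle_mul_swap {σ : Perm α} {a b : α} (hab : a ≠ b) (h : σ.SameCycle a b) :
    ¬ (σ * swap a b).SameCycle a b := by
  classical
  set τ := σ * swap a b with hτ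
  have hex : ∃ s, 1 ≤ s ∧ ((σ ^ s) b = a ∨ (σ ^ s) b = b) :=
    ⟨orderOf σ, orderOf_pos σ, Or.inr (by rw [pow_orderOf_eq_one]; rfl)⟩
  set s := Nat.find hex with hs
  obtain ⟨hs1, hs2⟩ := Nat.find_spec hex
  have hmin : ∀ j, 1 ≤ j → j < s → (σ ^ j) b ≠ a ∧ (σ ^ j) b ≠ b := by
    intro j h1 h2
    have := Nat.find_min hex h2
    push_neg at this
    exact this h1
  -- first: (σ ^ s) b = a
  have hsa : (σ ^ s) b = a := by
    rcases hs2 with hs2 | hs2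
    · exact hs2
    · exfalso
      obtain ⟨j, hj, hjb⟩ := Perm.SameCycle.exists_pow_eq' h.symm
      have hj0 : j ≠ 0 := by
        intro h0; rw [h0] at hjb; simp at hjb; exact hab hjb.symm
      have hjs : (σ ^ (j % s)) b = a := by rw [pow_mod_apply hs2, hjb]
      have hjm : j % s < s := Nat.mod_lt _ (by omega)
      by_cases hz : j % s = 0
      · rw [hz] at hjs; simp at hjs; exact hab hjs.symm
      · exact (hmin _ (by omega) hjm).1 hjs
  -- key: τ ^ i a = σ ^ i b for 1 ≤ i ≤ s
  have key : ∀ i, 1 ≤ i → i ≤ s → (τ ^ i) a = (σ ^ i) b := by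
    intro i
    induction i with
    | zero => omega
    | succ i ih =>
      intro _ hle
      by_cases hi : 1 ≤ i
      · have hmid := ih hi (by omega)
        have hne := hmin i hi (by omega)
        have hstep : (τ ^ (i + 1)) a = τ ((τ ^ i) a) := by rw [pow_succ', Perm.mul_apply]
        rw [hstep, hmid, hτ, Perm.mul_apply, swap_apply_of_ne_of_ne hne.1 hne.2,
          ← Perm.mul_apply, ← pow_succ']
      · have hi0 : i = 0 := by omega
        subst hi0
        simp [hτ, Perm.mul_apply, swap_apply_left]
  have hfix : (τ ^ s) a = a := by rw [key s hs1 le_rfl, hsa]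
  intro hcon
  obtain ⟨i, hi, hib⟩ := Perm.SameCycle.exists_pow_eq' hcon
  have hib' : (τ ^ (i % s)) a = b := by rw [pow_mod_apply hfix, hib]
  have him : i % s < s := Nat.mod_lt _ (by omega)
  by_cases hz : i % s = 0
  · rw [hz] at hib'; simp at hib'; exact hab hib'
  · have := key (i % s) (by omega) (by omega)
    rw [this] at hib'
    exact (hmin _ (by omega) him).2 hib'

/-- Merging case: exact description of the cycles of `σ * swap a b`. -/
lemma cycSetoid_mul_swap_of_not {σ : Perm α} {a b : α} (h : ¬ σ.SameCycle a b) :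
    cycSetoid (σ * swap a b) = mergeS (cycSetoid σ) a b := by
  have hab : (σ * swap a b).SameCycle a b := sameCycle_mul_swap_of_not h
  refine le_antisymm (mul_swap_le_merge σ a b) ?_
  have hle : cycSetoid σ ≤ cycSetoid (σ * swap a b) := by
    have h2 := mul_swap_le_merge (σ * swap a b) a b
    rw [mul_swap_swap] at h2
    rwa [mergeS_self _ a b hab] at h2
  rintro x y (h' | ⟨h1, h2⟩ | ⟨h1, h2⟩)
  · exact hle h'
  · exact (hle h1).trans (hab.trans (hle h2))
  · exact (hle h1).trans (hab.symm.trans (hle h2))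

lemma ncl_mul_swap_of_not {σ : Perm α} {a b : α} (h : ¬ σ.SameCycle a b) :
    ncl (cycSetoid (σ * swap a b)) + 1 = ncl (cycSetoid σ) := by
  rw [cycSetoid_mul_swap_of_not h]
  exact ncl_mergeS _ a b h

lemma ncl_mul_swap_of_same {σ : Perm α} {a b : α} (hab : a ≠ b) (h : σ.SameCycle a b) :
    ncl (cycSetoid (σ * swap a b)) = ncl (cycSetoid σ) + 1 := by
  have h2 := ncl_mul_swap_of_not (not_sameCycle_mul_swap hab h)
  rw [mul_swap_swap] at h2
  omega

end Part2
section Part3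
open Equiv

variable {α : Type*} [Fintype α] [DecidableEq α]

/-- The join of the cycle setoids of a list of permutations. -/
def jointS (l : List (Perm α)) : Setoid α := l.foldr (fun t S => cycSetoid t ⊔ S) ⊥

@[simp] lemma jointS_nil : jointS ([] : List (Perm α)) = ⊥ := rfl

@[simp] lemma jointS_cons (t : Perm α) (l : List (Perm α)) :
    jointS (t :: l) = cycSetoid t ⊔ jointS l := rfl

lemma jointS_append (l1 l2 : List (Perm α)) :
    jointS (l1 ++ l2) = jointS l1 ⊔ jointS l2 := by
  induction l1 with
  | nil => simp
  | cons t l ih => simp [ih, sup_assoc]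

lemma jointS_reverse (l : List (Perm α)) : jointS l.reverse = jointS l := by
  induction l with
  | nil => rfl
  | cons t l ih =>
    rw [List.reverse_cons, jointS_append, ih, jointS_cons]
    simp [sup_comm]

lemma sameCycle_swap_iff {a b x y : α} (h : (swap a b).SameCycle x y) :
    y = x ∨ y = swap a b x := by
  obtain ⟨k, hk⟩ := h
  have h2 : (swap a b) * (swap a b) = 1 := swap_mul_self a b
  rcases Int.even_or_odd k with ⟨m, hm⟩ | ⟨m, hm⟩
  · left
    rw [hm, ← two_mul, zpow_mul] at hk
    simp only [zpow_two, h2, one_zpow, Perm.one_apply] at hk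
    exact hk.symm
  · right
    rw [hm, zpow_add, zpow_mul, zpow_one, Perm.mul_apply] at hk
    simp only [zpow_two, h2, one_zpow, Perm.one_apply] at hk
    exact hk.symm

lemma sup_cyc_swap (S : Setoid α) (a b : α) :
    S ⊔ cycSetoid (swap a b) = mergeS S a b := by
  refine le_antisymm (sup_le (le_mergeS S a b) ?_) ?_
  · intro x y hxy
    rcases sameCycle_swap_iff hxy with h | h
    · rw [h]
    · subst h
      by_cases hxa : x = a
      · subst hxa
        rw [swap_apply_left]
        exact mergeS_rel_ab S x b
      · by_cases hxb : x = b
        · subst hxb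
          rw [swap_apply_right]
          exact (mergeS S a x).symm (mergeS_rel_ab S a x)
        · rw [swap_apply_of_ne_of_ne hxa hxb]
  · rintro x y (h | ⟨h1, h2⟩ | ⟨h1, h2⟩)
    · exact le_sup_left (α := Setoid α) h
    · refine (S ⊔ cycSetoid (swap a b)).trans (le_sup_left (α := Setoid α) h1) ?_
      refine (S ⊔ cycSetoid (swap a b)).trans ?_ (le_sup_left (α := Setoid α) h2)
      exact le_sup_right (α := Setoid α) (show (cycSetoid (swap a b)) a b from
        ⟨1, by simp [swap_apply_left]⟩)
    · refine (S ⊔ cycSetoid (swap a b)).trans (le_sup_left (α := Setoid α) h1) ?_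
      refine (S ⊔ cycSetoid (swap a b)).trans ?_ (le_sup_left (α := Setoid α) h2)
      exact le_sup_right (α := Setoid α) (show (cycSetoid (swap a b)) b a from
        ⟨1, by simp [swap_apply_right]⟩)

lemma cyc_prod_le_joint (l : List (Perm α)) : cycSetoid l.prod ≤ jointS l := by
  apply cycSetoid_le_of_inv
  intro x
  induction l generalizing x with
  | nil => exact (jointS []).refl x
  | cons t l ih =>
    have h1 : (jointS (t :: l)) x (l.prod x) :=
      le_sup_right (α := Setoid α) (ih x)
    have h2 : (jointS (t :: l)) (l.prod x) (t (l.prod x)) :=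
      le_sup_left (α := Setoid α) (sc_apply t (l.prod x))
    have h3 : (t :: l).prod x = t (l.prod x) := by
      rw [List.prod_cons, Perm.mul_apply]
    rw [h3]
    exact (jointS (t :: l)).trans h1 h2

lemma bot_rel_iff {x y : α} : (⊥ : Setoid α) x y ↔ x = y :=
  (congrFun (congrFun Setoid.bot_def x) y).to_iff

lemma ncl_bot : ncl (⊥ : Setoid α) = Nat.card α := by
  refine Nat.card_congr (Equiv.symm ⟨fun x => Quotient.mk _ x,
    Quotient.lift id (fun x y h => bot_rel_iff.mp h), fun x => rfl, ?_⟩)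
  rintro ⟨x⟩; rfl

lemma cycSetoid_one : cycSetoid (1 : Perm α) = ⊥ := by
  ext x y
  rw [cycSetoid_r, Perm.sameCycle_one, bot_rel_iff]

lemma ncl_cyc_one : ncl (cycSetoid (1 : Perm α)) = Nat.card α := by
  rw [cycSetoid_one, ncl_bot]

/-- The genus inequality. -/
lemma key_genus (l : List (Perm α)) (hl : ∀ t ∈ l, t.IsSwap) :
    Nat.card α + ncl (cycSetoid l.prod) ≤ l.length + 2 * ncl (jointS l) := by
  induction l using List.reverseRecOn with
  | nil => simp [ncl_cyc_one, ncl_bot]; omega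
  | append_singleton l t ih =>
    obtain ⟨a, b, hab, rfl⟩ := hl t (by simp)
    have ihl := ih (fun t' ht' => hl t' (by simp [ht']))
    have hprod : (l ++ [swap a b]).prod = l.prod * swap a b := by
      rw [List.prod_append, List.prod_singleton]
    have hJ : jointS (l ++ [swap a b]) = mergeS (jointS l) a b := by
      rw [jointS_append, jointS_cons, jointS_nil, sup_bot_eq, sup_cyc_swap]
    rw [hprod, hJ, List.length_append, List.length_singleton]
    by_cases h : jointS l a b
    · rw [mergeS_self _ a b h]
      have h2 := ncl_mul_swap_le_add_one l.prod a b
      omega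
    · have hns : ¬ l.prod.SameCycle a b := fun hc => h (cyc_prod_le_joint l hc)
      have h2 := ncl_mul_swap_of_not hns
      have h3 := ncl_mergeS (jointS l) a b h
      omega

/-- Upper bound: a permutation is a product of `card α - #cycles` swaps. -/
lemma exists_swap_list_aux : ∀ (m : ℕ) (σ : Perm α), σ.support.card = m →
    ∃ l : List (Perm α), (∀ t ∈ l, t.IsSwap) ∧
    l.prod = σ ∧ l.length + ncl (cycSetoid σ) = Nat.card α := by
  intro m
  induction m using Nat.strong_induction_on with
  | _ m ih =>
  intro σ hn
  by_cases h1 : σ = 1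
  · exact ⟨[], by simp, by simp [h1], by simp [h1, ncl_cyc_one]⟩
  · obtain ⟨x, hx⟩ : ∃ x, σ x ≠ x := by
      by_contra hc
      push_neg at hc
      exact h1 (Equiv.ext hc)
    set τ := σ * swap x (σ x) with hτ
    have hsupp : τ.support.card < σ.support.card := by
      have hinv : τ⁻¹ = swap (σ x) (σ⁻¹ (σ x)) * σ⁻¹ := by
        rw [hτ, mul_inv_rev, swap_inv, (Perm.inv_eq_iff_eq.mpr rfl : σ⁻¹ (σ x) = x), swap_comm]
      have hne : σ⁻¹ (σ x) ≠ σ x := by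
        rw [(Perm.inv_eq_iff_eq.mpr rfl : σ⁻¹ (σ x) = x)]
        exact fun hh => hx hh.symm
      have := Equiv.Perm.card_support_swap_mul (f := σ⁻¹) (x := σ x) hne
      rwa [← hinv, Perm.support_inv, Perm.support_inv] at this
    have hsplit : ncl (cycSetoid τ) = ncl (cycSetoid σ) + 1 :=
      ncl_mul_swap_of_same (fun hh => hx hh.symm) (sc_apply σ x)
    obtain ⟨l', hl'1, hl'2, hl'3⟩ := ih τ.support.card (hn ▸ hsupp) τ rfl
    refine ⟨l' ++ [swap x (σ x)], ?_, ?_, ?_⟩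
    · intro t ht
      rcases List.mem_append.mp ht with ht | ht
      · exact hl'1 t ht
      · rw [List.mem_singleton.mp ht]
        exact ⟨x, σ x, fun hh => hx hh.symm, rfl⟩
    · rw [List.prod_append, List.prod_singleton, hl'2, hτ, mul_swap_swap]
    · rw [List.length_append, List.length_singleton]
      omega

lemma exists_swap_list (σ : Perm α) : ∃ l : List (Perm α), (∀ t ∈ l, t.IsSwap) ∧
    l.prod = σ ∧ l.length + ncl (cycSetoid σ) = Nat.card α :=
  exists_swap_list_aux _ σ rfl

/-- Lower bound. -/
lemma swap_list_lower (l : List (Perm α)) (hl : ∀ t ∈ l, t.IsSwap) :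
    Nat.card α ≤ l.length + ncl (cycSetoid l.prod) := by
  induction l using List.reverseRecOn with
  | nil => simp [ncl_cyc_one]
  | append_singleton l t ih =>
    obtain ⟨a, b, hab, rfl⟩ := hl t (by simp)
    have ihl := ih (fun t' ht' => hl t' (by simp [ht']))
    have hprod : (l ++ [swap a b]).prod = l.prod * swap a b := by
      rw [List.prod_append, List.prod_singleton]
    rw [hprod, List.length_append, List.length_singleton]
    have h2 := ncl_le_mul_swap_add_one l.prod a b
    omega

end Part3
section Part4
open Equiv

variable {n : ℕ}

lemma trdist_add_ncl (a b : Perm (Fin n)) :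
    trdist a b + ncl (cycSetoid (a⁻¹ * b)) = n := by
  obtain ⟨l, hl1, hl2, hl3⟩ := exists_swap_list (a⁻¹ * b)
  have hcard : Nat.card (Fin n) = n := by simp
  rw [hcard] at hl3
  have hub : trdist a b ≤ l.length := Nat.sInf_le ⟨l, rfl, hl1, hl2⟩
  have hmem : trdist a b ∈ {k | ∃ l' : List (Perm (Fin n)), l'.length = k ∧
      (∀ t ∈ l', t.IsSwap) ∧ l'.prod = a⁻¹ * b} := Nat.sInf_mem ⟨l.length, l, rfl, hl1, hl2⟩
  obtain ⟨l0, hl0len, hl0sw, hl0prod⟩ := hmem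
  have hlow := swap_list_lower l0 hl0sw
  rw [hl0prod, hcard, hl0len] at hlow
  omega

lemma conj_zpow' {G : Type*} [Group G] (u g : G) (i : ℤ) :
    (u * g * u⁻¹) ^ i = u * g ^ i * u⁻¹ := by
  have h := (map_zpow (MulAut.conj u) g i).symm
  simpa [MulAut.conj_apply] using h

lemma swap_list_reverse_prod (l : List (Perm (Fin n))) (hl : ∀ t ∈ l, t.IsSwap) :
    l.reverse.prod = l.prod⁻¹ := by
  induction l with
  | nil => simp
  | cons t l ih =>
    obtain ⟨a, b, hab, rfl⟩ := hl t (by simp)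
    rw [List.reverse_cons, List.prod_append, List.prod_singleton,
      ih (fun t' ht' => hl t' (by simp [ht'])), List.prod_cons, mul_inv_rev, swap_inv]

/-- Core: for `c` on a geodesic from `1` to `P`, `c⁻¹ * (c⁻¹ * P)` has the same cycles as `P`. -/
lemma cycSetoid_geodesic {P c : Perm (Fin n)}
    (hgeo : trdist 1 c + trdist c P = trdist 1 P) :
    cycSetoid (c⁻¹ * (c⁻¹ * P)) = cycSetoid P := by
  have hcard : Nat.card (Fin n) = n := by simp
  have h1 : trdist 1 c + ncl (cycSetoid c) = n := by
    have := trdist_add_ncl (1 : Perm (Fin n)) c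
    rwa [inv_one, one_mul] at this
  have h2 : trdist c P + ncl (cycSetoid (c⁻¹ * P)) = n := trdist_add_ncl c P
  have h3 : trdist 1 P + ncl (cycSetoid P) = n := by
    have := trdist_add_ncl (1 : Perm (Fin n)) P
    rwa [inv_one, one_mul] at this
  obtain ⟨l1, hl11, hl12, hl13⟩ := exists_swap_list c
  obtain ⟨l2, hl21, hl22, hl23⟩ := exists_swap_list (c⁻¹ * P)
  rw [hcard] at hl13 hl23
  have hswaps : ∀ t ∈ l1 ++ l2, Perm.IsSwap t := by
    intro t ht
    rcases List.mem_append.mp ht with ht | ht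
    · exact hl11 t ht
    · exact hl21 t ht
  have hprod : (l1 ++ l2).prod = P := by
    rw [List.prod_append, hl12, hl22, mul_inv_cancel_left]
  have hkey := key_genus (l1 ++ l2) hswaps
  rw [hprod, hcard, List.length_append] at hkey
  have hlePJ : cycSetoid P ≤ jointS (l1 ++ l2) := by
    have h0 := cyc_prod_le_joint (l1 ++ l2)
    rwa [hprod] at h0
  have hnle : ncl (jointS (l1 ++ l2)) ≤ ncl (cycSetoid P) := ncl_le_of_le hlePJ
  have hJP : cycSetoid P = jointS (l1 ++ l2) :=
    setoid_eq_of_le_of_ncl_le hlePJ (by omega)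
  -- second list
  have hswaps' : ∀ t ∈ l1.reverse ++ l2, Perm.IsSwap t := by
    intro t ht
    rcases List.mem_append.mp ht with ht | ht
    · exact hl11 t (List.mem_reverse.mp ht)
    · exact hl21 t ht
  have hprod' : (l1.reverse ++ l2).prod = c⁻¹ * (c⁻¹ * P) := by
    rw [List.prod_append, swap_list_reverse_prod l1 hl11, hl12, hl22]
  have hJ' : jointS (l1.reverse ++ l2) = jointS (l1 ++ l2) := by
    rw [jointS_append, jointS_reverse, ← jointS_append]
  have hkey' := key_genus (l1.reverse ++ l2) hswaps'
  rw [hprod', hcard, List.length_append, List.length_reverse, hJ'] at hkey'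
  have hleQ : cycSetoid (c⁻¹ * (c⁻¹ * P)) ≤ cycSetoid P := by
    rw [hJP, ← hJ']
    have h0 := cyc_prod_le_joint (l1.reverse ++ l2)
    rwa [hprod'] at h0
  exact setoid_eq_of_le_of_ncl_le hleQ (by omega)

lemma cycleMins_congr {p q : Perm (Fin n)} (h : cycSetoid p = cycSetoid q) :
    cycleMins p = cycleMins q := by
  have h' : ∀ i j, p.SameCycle i j ↔ q.SameCycle i j := fun i j => by
    rw [← cycSetoid_r, h, cycSetoid_r]
  have hpred : (fun i => ∀ j, p.SameCycle i j → i ≤ j) =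
      (fun i => ∀ j, q.SameCycle i j → i ≤ j) := by
    funext i
    apply propext
    constructor
    · intro hh j hj
      exact hh j ((h' i j).mpr hj)
    · intro hh j hj
      exact hh j ((h' i j).mp hj)
  unfold cycleMins
  rw [hpred]

lemma cycSetoid_conj_congr {p q u : Perm (Fin n)} (h : cycSetoid p = cycSetoid q) :
    cycSetoid (u * p * u⁻¹) = cycSetoid (u * q * u⁻¹) := by
  have h' : ∀ i j, p.SameCycle i j ↔ q.SameCycle i j := fun i j => by
    rw [← cycSetoid_r, h, cycSetoid_r]
  ext i j
  rw [cycSetoid_r, cycSetoid_r, Perm.sameCycle_conj, Perm.sameCycle_conj]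
  exact h' _ _

lemma exists_min_sameCycle (p : Perm (Fin n)) (j : Fin n) :
    ∃ m, m ∈ cycleMins p ∧ p.SameCycle m j := by
  classical
  set O : Finset (Fin n) := Finset.univ.filter (fun i => p.SameCycle j i) with hO
  have hjO : j ∈ O := by
    rw [hO, Finset.mem_filter]
    exact ⟨Finset.mem_univ j, Perm.SameCycle.refl p j⟩
  have hne : O.Nonempty := ⟨j, hjO⟩
  set m := O.min' hne with hm
  have hmO : m ∈ O := O.min'_mem hne
  have hjm : p.SameCycle j m := by
    have := hmO
    rw [hO, Finset.mem_filter] at this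
    exact this.2
  refine ⟨m, ?_, hjm.symm⟩
  unfold cycleMins
  rw [Finset.mem_sort, @Finset.mem_filter _ _ (Classical.decPred _)]
  refine ⟨Finset.mem_univ m, fun j' hj' => ?_⟩
  apply O.min'_le
  rw [hO, Finset.mem_filter]
  exact ⟨Finset.mem_univ j', hjm.trans hj'⟩

lemma map_pointwise {β : Type*} (u v : Fin n → β) :
    ∀ (L : List (Fin n)), L.map u = L.map v → ∀ m ∈ L, u m = v m := by
  intro L
  induction L with
  | nil => intro _ m hm; cases hm
  | cons a L ih =>
    intro h m hm
    rw [List.map_cons, List.map_cons, List.cons_eq_cons] at h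
    rcases List.mem_cons.mp hm with rfl | hm
    · exact h.1
    · exact ih h.2 m hm

lemma conjugator_unique {P q u v : Perm (Fin n)} (hu : IsConjugator P q u)
    (hv : IsConjugator P q v) : u = v := by
  have hfix : ∀ m ∈ cycleMins P, u m = v m :=
    map_pointwise u v (cycleMins P) (hu.2.trans hv.2.symm)
  refine Equiv.ext fun j => ?_
  obtain ⟨m, hm, hmj⟩ := exists_min_sameCycle P j
  obtain ⟨i, hi⟩ := hmj
  have hu' : u * P ^ i = q ^ i * u := by
    have : (u * P * u⁻¹) ^ i = q ^ i := by rw [hu.1]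
    rw [conj_zpow'] at this
    rw [← this]
    group
  have hv' : v * P ^ i = q ^ i * v := by
    have : (v * P * v⁻¹) ^ i = q ^ i := by rw [hv.1]
    rw [conj_zpow'] at this
    rw [← this]
    group
  calc u j = u ((P ^ i) m) := by rw [hi]
    _ = (u * P ^ i) m := rfl
    _ = (q ^ i * u) m := by rw [hu']
    _ = (q ^ i) (u m) := rfl
    _ = (q ^ i) (v m) := by rw [hfix m hm]
    _ = (v * P ^ i) m := by rw [hv']; rfl
    _ = v j := by rw [Perm.mul_apply, hi]

end Part4

theorem stmt16 (n : ℕ) (μ : List ℕ) (hpos : ∀ x ∈ μ, 0 < x) (hsum : μ.sum = n)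
    (P a b c u u' w x y d : Equiv.Perm (Fin n)) (hP : P = canonPerm n μ 0)
    (hc : c ∈ midpts 1 P)
    (hab : orderedCycleType (a⁻¹ * b) = μ)
    (hu : IsConjugator P (a⁻¹ * b) u)
    (hu' : IsConjugator P (c⁻¹ * (c⁻¹ * P)) u')
    (hx : x = a * u * c * u⁻¹) (hy : y = a * u * (c⁻¹ * P) * u⁻¹)
    (hd : d = u'⁻¹ * c⁻¹ * u')
    (hw : IsConjugator P (x⁻¹ * y) w) :
    x * w * d * w⁻¹ = a ∧ x * w * (d⁻¹ * P) * w⁻¹ = b := by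
  obtain ⟨hgeo, -⟩ := hc
  have hcyc : cycSetoid (c⁻¹ * (c⁻¹ * P)) = cycSetoid P := cycSetoid_geodesic hgeo
  have hxy : x⁻¹ * y = u * (c⁻¹ * (c⁻¹ * P)) * u⁻¹ := by
    rw [hx, hy]; group
  have hconj2 : IsConjugator P (x⁻¹ * y) (u * u') := by
    constructor
    · rw [hxy, ← hu'.1]; group
    · have hmap : (cycleMins P).map ⇑(u * u') = ((cycleMins P).map ⇑u').map ⇑u := by
        rw [List.map_map]; rfl
      rw [hmap, hu'.2, cycleMins_congr hcyc, hu.2]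
      have h1 : cycleMins (x⁻¹ * y) = cycleMins (u * P * u⁻¹) := by
        rw [hxy]
        exact cycleMins_congr (cycSetoid_conj_congr hcyc)
      rw [h1, hu.1]
  have hww : w = u * u' := conjugator_unique hw hconj2
  constructor
  · rw [hx, hd, hww]; group
  · calc x * w * (d⁻¹ * P) * w⁻¹
        = a * u * (c * c) * (u' * P * u'⁻¹) * u⁻¹ := by rw [hx, hd, hww]; group
      _ = a * u * (c * c) * (c⁻¹ * (c⁻¹ * P)) * u⁻¹ := by rw [hu'.1]
      _ = a * (u * P * u⁻¹) := by group
      _ = b := by rw [hu.1]; group
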